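/- Let S, T₁, T₂ be symmetric m×m matrices with S ⪰ 0, and suppose T₁ ⪰ T₂ ⪰ 0. Then -log det(I + S^{1/2}T₁S^{1/2}) + tr(S^{1/2}T₁S^{1/2}) ≥ -log det(I + S^{1/2}T₂S^{1/2}) + tr(S^{1/2}T₂S^{1/2}). -/

import Mathlib

open Matrix

open scoped ComplexOrder in
/-- The positive semidefinite square root of a positive semidefinite matrix
(definition removed from Mathlib; restored verbatim from Mathlib of December 2024). -/
noncomputable def Matrix.PosSemidef.sqrt {n : Type*} [Fintype n] [DecidableEq n] {𝕜 : Type*}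
    [RCLike 𝕜] {A : Matrix n n 𝕜} (hA : A.PosSemidef) : Matrix n n 𝕜 :=
  hA.1.eigenvectorUnitary.1 * diagonal ((↑) ∘ (√·) ∘ hA.1.eigenvalues) *
  (star hA.1.eigenvectorUnitary : Matrix n n 𝕜)

lemma Matrix.PosSemidef.posSemidef_sqrt {n : ℕ} {A : Matrix (Fin n) (Fin n) ℝ}
    (hA : A.PosSemidef) : hA.sqrt.PosSemidef := by
  unfold Matrix.PosSemidef.sqrt
  have hd : (diagonal ((↑) ∘ (√·) ∘ hA.1.eigenvalues) : Matrix (Fin n) (Fin n) ℝ).PosSemidef :=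
    posSemidef_diagonal_iff.mpr (fun i => by simp [Real.sqrt_nonneg])
  have := hd.mul_mul_conjTranspose_same (hA.1.eigenvectorUnitary : Matrix (Fin n) (Fin n) ℝ)
  simpa [star_eq_conjTranspose, Function.comp_def] using this

lemma Matrix.PosSemidef.sqrt_mul_self {n : ℕ} {A : Matrix (Fin n) (Fin n) ℝ}
    (hA : A.PosSemidef) : hA.sqrt * hA.sqrt = A := by
  unfold Matrix.PosSemidef.sqrt
  have hU : star (hA.1.eigenvectorUnitary : Matrix (Fin n) (Fin n) ℝ) *
      (hA.1.eigenvectorUnitary : Matrix (Fin n) (Fin n) ℝ) = 1 :=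
    Matrix.mem_unitaryGroup_iff'.mp hA.1.eigenvectorUnitary.2
  conv_rhs => rw [hA.1.spectral_theorem, Unitary.conjStarAlgAut_apply]
  simp only [← Matrix.mul_assoc]
  rw [Matrix.mul_assoc (_ * _) (star _) _, hU, Matrix.mul_one,
    Matrix.mul_assoc _ (diagonal _) (diagonal _), diagonal_mul_diagonal]
  congr 2
  congr 1
  funext i
  simp [Real.mul_self_sqrt (hA.eigenvalues_nonneg i)]

open Matrix Finset

section helpers

variable {n : ℕ}

lemma psd_trace_nonneg {M : Matrix (Fin n) (Fin n) ℝ} (hM : M.PosSemidef) : 0 ≤ M.trace := by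
  rw [Matrix.trace]
  refine Finset.sum_nonneg fun i _ => ?_
  exact hM.diag_nonneg

lemma psd_trace_mul_nonneg {D E : Matrix (Fin n) (Fin n) ℝ} (hD : D.PosSemidef)
    (hE : E.PosSemidef) : 0 ≤ (D * E).trace := by
  have h1 : D * E = D * (hE.sqrt * hE.sqrt) := by rw [hE.sqrt_mul_self]
  rw [h1, ← Matrix.mul_assoc, Matrix.trace_mul_comm]
  have hconj : (hE.sqrt * D * hE.sqrt).PosSemidef := by
    have := hD.mul_mul_conjTranspose_same hE.sqrt
    rwa [hE.posSemidef_sqrt.isHermitian.eq] at this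
  simpa [Matrix.mul_assoc] using psd_trace_nonneg hconj

lemma trace_eq_sum_eigenvalues' {M : Matrix (Fin n) (Fin n) ℝ} (hM : M.IsHermitian) :
    M.trace = ∑ i, hM.eigenvalues i := by
  conv_lhs => rw [hM.spectral_theorem, Unitary.conjStarAlgAut_apply]
  rw [Matrix.trace_mul_comm, ← Matrix.mul_assoc]
  have h1 : star (hM.eigenvectorUnitary : Matrix (Fin n) (Fin n) ℝ) *
      (hM.eigenvectorUnitary : Matrix (Fin n) (Fin n) ℝ) = 1 :=
    Matrix.mem_unitaryGroup_iff'.mp hM.eigenvectorUnitary.2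
  rw [h1, Matrix.one_mul, Matrix.trace_diagonal]
  simp

lemma det_one_add_eq {B : Matrix (Fin n) (Fin n) ℝ} (hB : B.IsHermitian) :
    (1 + B).det = ∏ i, (1 + hB.eigenvalues i) := by
  set U : Matrix (Fin n) (Fin n) ℝ := (hB.eigenvectorUnitary : Matrix (Fin n) (Fin n) ℝ) with hU
  have hUU : U * star U = 1 := Matrix.mem_unitaryGroup_iff.mp hB.eigenvectorUnitary.2
  have h1 : (1 : Matrix (Fin n) (Fin n) ℝ) + B
      = U * (1 + diagonal (RCLike.ofReal ∘ hB.eigenvalues)) * star U := by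
    rw [Matrix.mul_add, Matrix.add_mul, Matrix.mul_one, hUU]
    conv_lhs => rw [hB.spectral_theorem, Unitary.conjStarAlgAut_apply]
  rw [h1, Matrix.det_mul_right_comm, hUU, Matrix.one_mul]
  rw [show (1 : Matrix (Fin n) (Fin n) ℝ) = diagonal (fun _ => (1:ℝ)) from (diagonal_one).symm,
    Matrix.diagonal_add, Matrix.det_diagonal]
  simp

lemma log_det_one_add_le_trace {B : Matrix (Fin n) (Fin n) ℝ} (hB : B.PosSemidef) :
    Real.log (1 + B).det ≤ B.trace := by
  rw [det_one_add_eq hB.isHermitian, trace_eq_sum_eigenvalues' hB.isHermitian]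
  rw [Real.log_prod]
  · refine Finset.sum_le_sum fun i _ => ?_
    have hi := hB.eigenvalues_nonneg i
    have := Real.log_le_sub_one_of_pos (x := 1 + hB.isHermitian.eigenvalues i) (by linarith)
    linarith
  · intro i _
    have hi := hB.eigenvalues_nonneg i
    positivity

lemma key_step {A D : Matrix (Fin n) (Fin n) ℝ} (hA : A.PosSemidef) (hD : D.PosSemidef) :
    Real.log (1 + (A + D)).det - Real.log (1 + A).det ≤ D.trace := by
  set C : Matrix (Fin n) (Fin n) ℝ := 1 + A with hCdef
  have hC : C.PosDef := Matrix.PosDef.add_posSemidef Matrix.PosDef.one hA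
  set Q : Matrix (Fin n) (Fin n) ℝ := hC.posSemidef.sqrt with hQdef
  have hQps : Q.PosSemidef := hC.posSemidef.posSemidef_sqrt
  have hQQ : Q * Q = C := hC.posSemidef.sqrt_mul_self
  have hdetQ : IsUnit Q.det := by
    have : Q.det * Q.det = C.det := by rw [← Matrix.det_mul, hQQ]
    have hCd := hC.det_pos
    refine isUnit_iff_ne_zero.mpr fun h => ?_
    rw [h, mul_zero] at this; linarith [this ▸ hCd]
  have hQinv : Q * Q⁻¹ = 1 := Matrix.mul_nonsing_inv Q hdetQ
  have hQinv' : Q⁻¹ * Q = 1 := Matrix.nonsing_inv_mul Q hdetQ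
  have hQinvH : Q⁻¹ᴴ = Q⁻¹ := by
    rw [Matrix.conjTranspose_nonsing_inv, hQps.isHermitian.eq]
  set B : Matrix (Fin n) (Fin n) ℝ := Q⁻¹ * D * Q⁻¹ with hBdef
  have hB : B.PosSemidef := by
    have := hD.mul_mul_conjTranspose_same Q⁻¹
    rwa [hQinvH] at this
  have hfact : (1 : Matrix (Fin n) (Fin n) ℝ) + (A + D) = Q * (1 + B) * Q := by
    rw [Matrix.mul_add, Matrix.add_mul, Matrix.mul_one, hQQ, hBdef]
    have : Q * (Q⁻¹ * D * Q⁻¹) * Q = D := by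
      rw [← Matrix.mul_assoc, ← Matrix.mul_assoc, hQinv, Matrix.one_mul, Matrix.mul_assoc,
        hQinv', Matrix.mul_one]
    rw [this, hCdef]; abel
  have h1B : (1 + B).PosDef := Matrix.PosDef.add_posSemidef Matrix.PosDef.one hB
  have hdets : (1 + (A + D)).det = C.det * (1 + B).det := by
    have hCd2 : C.det = Q.det * Q.det := by rw [← Matrix.det_mul, hQQ]
    rw [hfact, Matrix.det_mul, Matrix.det_mul, hCd2]; ring
  have hlog : Real.log (1 + (A + D)).det = Real.log C.det + Real.log (1 + B).det := by
    rw [hdets, Real.log_mul (ne_of_gt hC.det_pos) (ne_of_gt h1B.det_pos)]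
  rw [hlog, hCdef]
  have hBtr : B.trace ≤ D.trace := by
    have htr1 : B.trace = (D * C⁻¹).trace := by
      rw [hBdef, Matrix.trace_mul_comm (Q⁻¹ * D) Q⁻¹, ← Matrix.mul_assoc,
        ← Matrix.mul_inv_rev, hQQ, Matrix.trace_mul_comm]
    have hCinv : (1 : Matrix (Fin n) (Fin n) ℝ) - C⁻¹ = C⁻¹ * (A + A * A) * C⁻¹ := by
      have hCC : C * C⁻¹ = 1 := Matrix.mul_nonsing_inv C (isUnit_iff_ne_zero.mpr (ne_of_gt hC.det_pos))
      have hCC' : C⁻¹ * C = 1 := Matrix.nonsing_inv_mul C (isUnit_iff_ne_zero.mpr (ne_of_gt hC.det_pos))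
      have : A + A * A = A * C := by rw [hCdef, Matrix.mul_add, Matrix.mul_one]
      rw [this, ← Matrix.mul_assoc, Matrix.mul_assoc (C⁻¹ * A) C C⁻¹, hCC, Matrix.mul_one]
      calc (1 : Matrix (Fin n) (Fin n) ℝ) - C⁻¹ = C⁻¹ * C - C⁻¹ * 1 := by
            rw [hCC', Matrix.mul_one]
        _ = C⁻¹ * (C - 1) := by rw [Matrix.mul_sub]
        _ = C⁻¹ * A := by rw [hCdef, add_sub_cancel_left]
    have hCinvH : C⁻¹ᴴ = C⁻¹ := by
      rw [Matrix.conjTranspose_nonsing_inv, hC.isHermitian.eq]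
    have hsub : ((1 : Matrix (Fin n) (Fin n) ℝ) - C⁻¹).PosSemidef := by
      rw [hCinv]
      have hAA : (A + A * A).PosSemidef := by
        have h2 : (A * A).PosSemidef := by
          have := Matrix.posSemidef_conjTranspose_mul_self A
          rwa [hA.isHermitian.eq] at this
        exact hA.add h2
      have := hAA.mul_mul_conjTranspose_same C⁻¹
      rwa [hCinvH] at this
    have := psd_trace_mul_nonneg hD hsub
    rw [Matrix.mul_sub, Matrix.trace_sub, Matrix.mul_one] at this
    rw [htr1]; linarith
  have := log_det_one_add_le_trace hB
  linarith

end helpers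

theorem kl_cost_monotone (m : ℕ) (S T₁ T₂ : Matrix (Fin m) (Fin m) ℝ)
    (hS : S.PosSemidef) (h12 : (T₁ - T₂).PosSemidef) (hT₂ : T₂.PosSemidef) :
    -Real.log (1 + hS.sqrt * T₂ * hS.sqrt).det + (hS.sqrt * T₂ * hS.sqrt).trace ≤
    -Real.log (1 + hS.sqrt * T₁ * hS.sqrt).det + (hS.sqrt * T₁ * hS.sqrt).trace := by
  have hsH : hS.sqrt.IsHermitian := hS.posSemidef_sqrt.isHermitian
  have mk : ∀ (T : Matrix (Fin m) (Fin m) ℝ), T.PosSemidef →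
      (hS.sqrt * T * hS.sqrt).PosSemidef := fun T hT => by
    have := hT.mul_mul_conjTranspose_same hS.sqrt
    rwa [hsH.eq] at this
  have hA : (hS.sqrt * T₂ * hS.sqrt).PosSemidef := mk T₂ hT₂
  have hD : (hS.sqrt * (T₁ - T₂) * hS.sqrt).PosSemidef := mk _ h12
  have hsum : hS.sqrt * T₁ * hS.sqrt
      = hS.sqrt * T₂ * hS.sqrt + hS.sqrt * (T₁ - T₂) * hS.sqrt := by
    rw [Matrix.mul_sub, Matrix.sub_mul]; abel
  have hkey := key_step hA hD
  rw [hsum, Matrix.trace_add]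
  linarith
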